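/- Fix an integer r ≥ 1. With x_j = cos(jπ/n) the Chebyshev points, define P_r^0(n) = Σ_{j=1}^{n} (1 − x_j)^{−r} = Σ_{j=1}^{n} (1 − cos(jπ/n))^{−r}. Then lim_{n→∞} P_r^0(n)/n^{2r} = 2^r·ζ(2r)/π^{2r}, where ζ is the Riemann zeta function. -/

import Mathlib

open Real Filter Finset Topology

lemma aux_ptwise (c : ℝ) (hc : 0 < c) :
    Tendsto (fun n : ℕ => (n:ℝ)^2 * (1 - Real.cos (c / n))) atTop (𝓝 (c^2/2)) := by
  rw [← tendsto_sub_nhds_zero_iff]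
  apply squeeze_zero_norm' (a := fun n : ℕ => c^4 * (5/96) / (n:ℝ)^2)
  · filter_upwards [eventually_ge_atTop (⌈c⌉₊ + 1)] with n hn
    have hn1 : (1:ℝ) ≤ (n:ℝ) := by
      have : 1 ≤ n := le_trans (Nat.le_add_left 1 _) hn
      exact_mod_cast this
    have hcn : |c / n| ≤ 1 := by
      rw [abs_div, abs_of_pos hc, abs_of_pos (by linarith : (0:ℝ) < n)]
      rw [div_le_one (by linarith)]
      calc c ≤ ⌈c⌉₊ := Nat.le_ceil c
        _ ≤ n := by exact_mod_cast le_trans (Nat.le_succ _) hn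
    have hb := Real.cos_bound hcn
    have hne : (n:ℝ) ≠ 0 := by positivity
    have key : (n:ℝ)^2 * (1 - Real.cos (c/n)) - c^2/2
        = -((n:ℝ)^2 * (Real.cos (c/n) - (1 - (c/n)^2/2))) := by
      field_simp
      ring
    rw [key, norm_neg, norm_mul, norm_pow]
    calc ‖(n:ℝ)‖^2 * ‖Real.cos (c/n) - (1 - (c/n)^2/2)‖
        ≤ (n:ℝ)^2 * (|c/n|^4 * (5/96)) := by
          rw [Real.norm_eq_abs, Real.norm_eq_abs, abs_of_nonneg (by positivity : (0:ℝ) ≤ (n:ℝ))]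
          gcongr
      _ = c^4 * (5/96) / (n:ℝ)^2 := by
          rw [abs_div, abs_of_pos hc, abs_of_nonneg (by positivity : (0:ℝ) ≤ (n:ℝ))]
          field_simp
  · simp only [div_eq_mul_inv]
    rw [show (0:ℝ) = c^4 * (5/96) * 0 by ring]
    exact Tendsto.const_mul _ <| Tendsto.inv_tendsto_atTop <|
      (tendsto_pow_atTop (two_ne_zero)).comp tendsto_natCast_atTop_atTop

lemma aux_lb {j n : ℕ} (hj : 1 ≤ j) (hjn : j ≤ n) :
    2 * (j:ℝ)^2 / (n:ℝ)^2 ≤ 1 - Real.cos (j * Real.pi / n) := by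
  have hn : (0:ℝ) < n := by exact_mod_cast lt_of_lt_of_le (Nat.lt_of_lt_of_le Nat.zero_lt_one hj) hjn
  have hjn' : (j:ℝ) ≤ (n:ℝ) := by exact_mod_cast hjn
  have hj0 : (0:ℝ) < j := by exact_mod_cast hj
  set x : ℝ := j * Real.pi / n with hx
  have hx0 : 0 ≤ x / 2 := by positivity
  have hx2 : x / 2 ≤ Real.pi / 2 := by
    rw [div_le_div_iff_of_pos_right two_pos, hx, div_le_iff₀ hn]
    nlinarith [Real.pi_pos]
  have hs := Real.mul_le_sin hx0 hx2
  have hcos : 1 - Real.cos x = 2 * Real.sin (x/2)^2 := by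
    have h1 := Real.cos_two_mul (x/2)
    rw [show 2*(x/2) = x by ring] at h1
    have h2 := Real.sin_sq_add_cos_sq (x/2)
    nlinarith
  rw [hcos]
  have hsin : (j:ℝ)/n ≤ Real.sin (x/2) := by
    refine le_trans (le_of_eq ?_) hs
    rw [hx]
    field_simp
  have h0 : (0:ℝ) ≤ (j:ℝ)/n := by positivity
  calc 2 * (j:ℝ)^2 / (n:ℝ)^2 = 2 * ((j:ℝ)/n)^2 := by field_simp
    _ ≤ 2 * Real.sin (x/2)^2 := by nlinarith

lemma aux_real (r : ℕ) (hr : 1 ≤ r) :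
    Tendsto
      (fun n : ℕ =>
        (∑ j ∈ Finset.Icc 1 n, 1 / (1 - Real.cos (j * Real.pi / n)) ^ r) / (n : ℝ) ^ (2 * r))
      atTop
      (𝓝 (2 ^ r * (∑' j : ℕ, 1 / (j:ℝ)^(2*r)) / Real.pi ^ (2 * r))) := by
  have hπ := Real.pi_pos
  have h2r : 1 < 2 * r := by omega
  set F : ℕ → ℕ → ℝ := fun n j =>
    if 1 ≤ j ∧ j ≤ n then 1 / ((n:ℝ)^2 * (1 - Real.cos (j * Real.pi / n))) ^ r else 0 with hF
  set g : ℕ → ℝ := fun j => 1 / ((j:ℝ)^2 * Real.pi^2 / 2) ^ r with hg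
  have hgj : ∀ j : ℕ, g j = (2^r / Real.pi^(2*r)) * (1 / (j:ℝ)^(2*r)) := by
    intro j
    rcases Nat.eq_zero_or_pos j with rfl | hj
    · simp [hg, zero_pow (by omega : r ≠ 0), zero_pow (by omega : 2*r ≠ 0)]
    · have hj0 : (0:ℝ) < j := by exact_mod_cast hj
      rw [hg]
      rw [pow_mul, pow_mul]
      field_simp
      have h12 : ((1:ℝ)/2)^r * 2^r = 1 := by rw [← mul_pow]; norm_num
      linear_combination (-(Real.pi^(r*2)*(j:ℝ)^(r*2))) * h12
  -- main convergence of tsums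
  have hmain : Tendsto (fun n => ∑' j, F n j) atTop (𝓝 (∑' j, g j)) := by
    refine tendsto_tsum_of_dominated_convergence (f := F) (g := g)
      (bound := fun j => 1 / (2^r * (j:ℝ)^(2*r))) ?_ ?_ ?_
    · apply Summable.congr (((Real.summable_one_div_nat_pow.mpr h2r).mul_left (1/2^r)))
      intro j
      rw [one_div_mul_one_div]
    · intro j
      rcases Nat.eq_zero_or_pos j with rfl | hj
      · have : ∀ n : ℕ, F n 0 = 0 := by intro n; simp [hF]
        simp only [this]
        have : g 0 = 0 := by simp [hg, zero_pow (by omega : r ≠ 0)]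
        rw [this]
        exact tendsto_const_nhds
      · have hj0 : (0:ℝ) < j := by exact_mod_cast hj
        have hc : (0:ℝ) < (j:ℝ) * Real.pi := by positivity
        have h1 := aux_ptwise ((j:ℝ) * Real.pi) hc
        have hne : (((j:ℝ) * Real.pi)^2/2) ^ r ≠ 0 := by positivity
        have h2 := ((h1.pow r).inv₀ hne)
        have heq : (((j:ℝ) * Real.pi)^2/2) ^ r = ((j:ℝ)^2 * Real.pi^2 / 2) ^ r := by ring
        rw [heq] at h2
        have heq2 : (fun n : ℕ => (((n:ℝ)^2 * (1 - Real.cos ((j:ℝ) * Real.pi / n))) ^ r)⁻¹)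
            =ᶠ[atTop] (fun n => F n j) := by
          filter_upwards [eventually_ge_atTop j] with n hn
          simp only [hF]
          rw [if_pos ⟨hj, hn⟩, one_div]
        have hglim : g j = (((j:ℝ)^2 * Real.pi^2 / 2) ^ r)⁻¹ := by
          rw [hg]
          exact one_div _
        rw [hglim]
        exact Tendsto.congr' heq2 h2
    · apply Filter.Eventually.of_forall
      intro n j
      simp only [hF]
      by_cases h : 1 ≤ j ∧ j ≤ n
      · simp only [h.1, h.2, and_self, if_true]
        have hj0 : (0:ℝ) < j := by exact_mod_cast h.1
        have hn0 : (0:ℝ) < n := by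
          have : 1 ≤ n := le_trans h.1 h.2
          exact_mod_cast this
        have hlb := aux_lb h.1 h.2
        have hd : 2 * (j:ℝ)^2 ≤ (n:ℝ)^2 * (1 - Real.cos ((j:ℝ) * Real.pi / n)) := by
          calc 2 * (j:ℝ)^2 = (n:ℝ)^2 * (2 * (j:ℝ)^2 / (n:ℝ)^2) := by field_simp
            _ ≤ (n:ℝ)^2 * (1 - Real.cos ((j:ℝ) * Real.pi / n)) :=
                mul_le_mul_of_nonneg_left hlb (by positivity)
        have hdpos : (0:ℝ) < 2 * (j:ℝ)^2 := by positivity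
        have hpow : (2 * (j:ℝ)^2)^r ≤ ((n:ℝ)^2 * (1 - Real.cos ((j:ℝ) * Real.pi / n)))^r :=
          pow_le_pow_left₀ hdpos.le hd r
        have hden : (0:ℝ) < ((n:ℝ)^2 * (1 - Real.cos ((j:ℝ) * Real.pi / n)))^r :=
          lt_of_lt_of_le (pow_pos hdpos r) hpow
        have hnorm : ‖1 / ((n:ℝ)^2 * (1 - Real.cos ((j:ℝ) * Real.pi / n)))^r‖
            = 1 / ((n:ℝ)^2 * (1 - Real.cos ((j:ℝ) * Real.pi / n)))^r := by
          rw [Real.norm_eq_abs, abs_of_nonneg (one_div_nonneg.mpr hden.le)]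
        rw [hnorm]
        calc 1 / ((n:ℝ)^2 * (1 - Real.cos ((j:ℝ) * Real.pi / n)))^r
            ≤ 1 / (2 * (j:ℝ)^2)^r := by
              apply one_div_le_one_div_of_le (by positivity) hpow
          _ = 1 / (2^r * (j:ℝ)^(2*r)) := by rw [mul_pow, ← pow_mul]
      · simp only [h, if_false, norm_zero]
        apply one_div_nonneg.mpr
        positivity
  -- rewrite the sequence
  have hseq : (fun n : ℕ => ∑' j, F n j) =ᶠ[atTop]
      (fun n : ℕ =>
        (∑ j ∈ Finset.Icc 1 n, 1 / (1 - Real.cos (j * Real.pi / n)) ^ r) / (n : ℝ) ^ (2 * r)) := by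
    filter_upwards [eventually_ge_atTop 1] with n hn
    symm
    rw [tsum_eq_sum (s := Finset.Icc 1 n) (by
      intro j hj
      simp only [hF]
      simp only [Finset.mem_Icc, not_and_or, not_le] at hj
      simp only [ite_eq_right_iff]
      intro h
      omega)]
    rw [Finset.sum_div]
    apply Finset.sum_congr rfl
    intro j hj
    simp only [Finset.mem_Icc] at hj
    simp only [hF]
    simp only [hj.1, hj.2, and_self, if_true]
    rw [div_div]
    congr 1
    rw [mul_pow, ← pow_mul]
    ring
  -- rewrite the limit value
  have hlim : ∑' j, g j = 2 ^ r * (∑' j : ℕ, 1 / (j:ℝ)^(2*r)) / Real.pi ^ (2 * r) := by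
    simp_rw [hgj]
    rw [tsum_mul_left]
    ring
  rw [← hlim]
  exact Tendsto.congr' hseq hmain

theorem stmt_7 (r : ℕ) (hr : 1 ≤ r) :
    Filter.Tendsto
      (fun n : ℕ =>
        (((∑ j ∈ Finset.Icc 1 n, 1 / (1 - Real.cos (j * Real.pi / n)) ^ r) /
          (n : ℝ) ^ (2 * r) : ℝ) : ℂ))
      Filter.atTop
      (nhds (2 ^ r * riemannZeta (2 * r) / (Real.pi : ℂ) ^ (2 * r))) := by
  have h2r : 1 < 2 * r := by omega
  have hzeta : riemannZeta (2 * (r:ℂ)) = ((∑' j : ℕ, 1 / (j:ℝ)^(2*r) : ℝ) : ℂ) := by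
    rw [show (2 * (r:ℂ)) = ((2*r : ℕ) : ℂ) by push_cast; ring]
    rw [zeta_nat_eq_tsum_of_gt_one h2r, Complex.ofReal_tsum]
    push_cast
    rfl
  have key := aux_real r hr
  have := (Complex.continuous_ofReal.tendsto _).comp key
  convert this using 2
  · rfl
  rw [hzeta]
  push_cast
  ring
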